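/- Let a ∈ F_q^K and let A be the m × mK block-diagonal matrix with m copies of the row vector a. Let Q be an m×(m-2ε) matrix over F_q such that Q^T generates an [m, m-2ε] MDS code, and let A^{(e)} = [A | Q]. Then for every S ⊆ [mK] with |S| = 2ε, rank(A^{(e)}|_{S ∪ {mK+1, ..., mK+m-2ε}}) = rank(A|_S) + (m - 2ε). -/

import Mathlib

open Matrix

section Defs
variable {F : Type*} [Field F]

/-- Rank of the submatrix of `G` consisting of the columns indexed by `S`. -/
noncomputable def colRank {m α : Type*} [Fintype α] (G : Matrix m α F) (S : Finset α) : ℕ :=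
  (G.submatrix id (fun j : S => (j : α))).rank

/-- The row space of a matrix. -/
def rowSpan {m α : Type*} (G : Matrix m α F) : Submodule F (α → F) :=
  Submodule.span F (Set.range fun i => G i)

/-- Rank of the restriction (puncturing) of a code `C` to the coordinates in `S`. -/
noncomputable def restrRank {α : Type*} (C : Submodule F (α → F)) (S : Finset α) : ℕ :=
  Module.finrank F (C.map (LinearMap.funLeft F F (fun j : S => (j : α))))

/-- Shortening of a code on coordinates `α ⊕ β` to the coordinates `α`. -/
noncomputable def shortenSum {α β : Type*} (D : Submodule F ((α ⊕ β) → F)) :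
    Submodule F (α → F) :=
  Submodule.map (LinearMap.funLeft F F Sum.inl)
    (D ⊓ (⨅ j : β, LinearMap.ker
      (LinearMap.proj (R := F) (Sum.inr j) : ((α ⊕ β) → F) →ₗ[F] F)))

/-- A valid (zero-error, worst case) scheme for the point-to-point function-update problem. -/
def IsValidScheme [DecidableEq F] {n m ℓ : ℕ} (A : Matrix (Fin m) (Fin n) F)
    (H : Matrix (Fin ℓ) (Fin n) F) (ε : ℕ)
    (D : (Fin ℓ → F) → (Fin m → F) → (Fin m → F)) : Prop :=
  ∀ X E : Fin n → F, hammingNorm E ≤ ε →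
    D (H.mulVec (X + E)) (A.mulVec X) = A.mulVec (X + E)

end Defs
/-- the extended matrix `[A | Q]` satisfies the rank condition:
for every `S` of size `2ε`, adjoining all the extension columns increases the rank
of `A|_S` by exactly `m - 2ε`. -/
theorem striped_extension_rank {F : Type*} [Field F] [Fintype F] {m K ε : ℕ}
    (hε : 2 * ε ≤ m) (a : Fin K → F)
    (A : Matrix (Fin m) (Fin m × Fin K) F)
    (hA : ∀ i j, A i j = if i = j.1 then a j.2 else 0)
    (Q : Matrix (Fin m) (Fin (m - 2 * ε)) F)
    (hMDS : ∀ T : Finset (Fin m), T.card = m - 2 * ε → colRank Qᵀ T = m - 2 * ε) :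
    ∀ S : Finset (Fin m × Fin K), S.card = 2 * ε →
      (Matrix.fromCols (A.submatrix id (fun j : S => (j : Fin m × Fin K))) Q).rank =
        colRank A S + (m - 2 * ε) := by
  intro S hS
  classical
  set B := A.submatrix id (fun j : S => (j : Fin m × Fin K)) with hB
  set R : Finset (Fin m) := S.image Prod.fst with hR
  have hRcard : R.card ≤ 2 * ε := hS ▸ Finset.card_image_le
  obtain ⟨T, hTsub, hTcard⟩ : ∃ T ⊆ Rᶜ, T.card = m - 2 * ε := by
    apply Finset.exists_subset_card_eq
    rw [Finset.card_compl, Fintype.card_fin]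
    exact Nat.sub_le_sub_left hRcard m
  -- Q restricted to rows in T has full column rank
  have hQT : (Q.submatrix (fun i : T => (i : Fin m)) id).rank = m - 2 * ε := by
    have h := hMDS T hTcard
    unfold colRank at h
    rw [← Matrix.rank_transpose]
    convert h using 2
    ext i j; rfl
  have hdomrank : Module.finrank F (Fin (m - 2 * ε) → F) = m - 2 * ε := by
    simp [Module.finrank_pi]
  have hQTinj : Function.Injective
      (Q.submatrix (fun i : T => (i : Fin m)) id).mulVecLin := by
    rw [← LinearMap.ker_eq_bot]
    have h1 := LinearMap.finrank_range_add_finrank_ker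
      (Q.submatrix (fun i : T => (i : Fin m)) id).mulVecLin
    rw [hdomrank] at h1
    have h2 : (Q.submatrix (fun i : T => (i : Fin m)) id).rank
        + Module.finrank F (LinearMap.ker
          (Q.submatrix (fun i : T => (i : Fin m)) id).mulVecLin) = m - 2 * ε := h1
    rw [hQT] at h2
    have : Module.finrank F (LinearMap.ker
        (Q.submatrix (fun i : T => (i : Fin m)) id).mulVecLin) = 0 := by omega
    exact Submodule.finrank_eq_zero.mp this
  have hQinj : Function.Injective Q.mulVecLin := by
    intro y₁ y₂ hy
    apply hQTinj
    ext i
    simp only [Matrix.mulVecLin_apply] at hy ⊢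
    have := congrFun hy (i : Fin m)
    simpa [Matrix.mulVec, dotProduct, Matrix.submatrix] using this
  -- elements of range B vanish outside R
  have hBsupp : ∀ x : S → F, ∀ i ∉ R, B.mulVec x i = 0 := by
    intro x i hi
    apply Finset.sum_eq_zero
    intro j _
    have hij : i ≠ (j : Fin m × Fin K).1 := by
      intro h
      exact hi (Finset.mem_image.mpr ⟨(j : Fin m × Fin K), j.2, h.symm⟩)
    simp [hB, Matrix.submatrix, hA, hij]
  -- the ranges intersect trivially
  have hdisj : LinearMap.range B.mulVecLin ⊓ LinearMap.range Q.mulVecLin = ⊥ := by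
    rw [eq_bot_iff]
    rintro v hv
    obtain ⟨⟨x, hx⟩, ⟨y, hy⟩⟩ := Submodule.mem_inf.mp hv
    have hy0 : y = 0 := by
      apply hQTinj
      rw [map_zero]
      ext i
      have hiR : (i : Fin m) ∉ R := by
        have := hTsub i.2
        simpa [Finset.mem_compl] using this
      have hvi : v (i : Fin m) = 0 := by
        rw [← hx]
        exact hBsupp x _ hiR
      have hQv : Q.mulVec y (i : Fin m) = 0 := by
        rw [show Q.mulVec y = v from hy]
        exact hvi
      simpa [Matrix.mulVecLin_apply, Matrix.mulVec, dotProduct,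
        Matrix.submatrix] using hQv
    have : v = 0 := by rw [← hy, hy0, map_zero]
    simp [this]
  -- range of fromColumns is the sup
  have hrange : LinearMap.range (Matrix.fromCols B Q).mulVecLin
      = LinearMap.range B.mulVecLin ⊔ LinearMap.range Q.mulVecLin := by
    apply le_antisymm
    · rintro v ⟨z, rfl⟩
      have hz : z = Sum.elim (z ∘ Sum.inl) (z ∘ Sum.inr) := by
        ext (j | j) <;> rfl
      rw [Matrix.mulVecLin_apply, hz, Matrix.fromCols_mulVec_sumElim]
      exact Submodule.add_mem_sup ⟨z ∘ Sum.inl, rfl⟩ ⟨z ∘ Sum.inr, rfl⟩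
    · rw [sup_le_iff]
      constructor
      · rintro v ⟨x, rfl⟩
        refine ⟨Sum.elim x 0, ?_⟩
        rw [Matrix.mulVecLin_apply, Matrix.fromCols_mulVec_sumElim]
        simp [Matrix.mulVec_zero]
      · rintro v ⟨y, rfl⟩
        refine ⟨Sum.elim 0 y, ?_⟩
        rw [Matrix.mulVecLin_apply, Matrix.fromCols_mulVec_sumElim]
        simp [Matrix.mulVec_zero]
  have hQrank : Q.rank = m - 2 * ε := by
    have h1 := LinearMap.finrank_range_add_finrank_ker Q.mulVecLin
    have hker : LinearMap.ker Q.mulVecLin = ⊥ := LinearMap.ker_eq_bot.mpr hQinj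
    rw [hker, finrank_bot, add_zero, hdomrank] at h1
    exact h1
  have hsum := Submodule.finrank_sup_add_finrank_inf_eq
    (LinearMap.range B.mulVecLin) (LinearMap.range Q.mulVecLin)
  rw [hdisj, finrank_bot, add_zero] at hsum
  calc (Matrix.fromCols B Q).rank
      = Module.finrank F ↥(LinearMap.range B.mulVecLin ⊔ LinearMap.range Q.mulVecLin) := by
        rw [Matrix.rank, hrange]
    _ = B.rank + Q.rank := hsum
    _ = colRank A S + (m - 2 * ε) := by rw [hQrank]; rfl
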